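/- If G is a group, H ≤ G a subgroup, Z ≤ Y ≤ G subgroups with Y abelian, and the quotient Y/Z is divisible (every element has an n-th root for all n ≥ 1), and Y ∩ H has finite index in Y, then Y = (Y ∩ H)Z and the index [Y : Y ∩ H] equals [Z : Z ∩ H]. -/

import Mathlib

theorem divisible_quotient_finite_index
    (G : Type*) [Group G] (H Y Z : Subgroup G)
    (hZY : Z ≤ Y)
    (hab : ∀ x ∈ Y, ∀ y ∈ Y, x * y = y * x)
    (hdiv : ∀ y ∈ Y, ∀ n : ℕ, 1 ≤ n → ∃ x ∈ Y, ∃ z ∈ Z, y = x ^ n * z)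
    (hfin : H.relIndex Y ≠ 0) :
    (Y ⊓ H) ⊔ Z = Y ∧ H.relIndex Y = H.relIndex Z := by
  set H' := H.subgroupOf Y with hH'
  set Z' := Z.subgroupOf Y with hZ'
  haveI : H'.Normal := by
    constructor
    intro h hh g
    have hcomm : g * h = h * g := Subtype.ext (hab g g.2 h h.2)
    have : g * h * g⁻¹ = h := by rw [hcomm]; group
    rwa [this]
  have hn : H'.index = H.relIndex Y := rfl
  have hsup : H' ⊔ Z' = ⊤ := by
    rw [eq_top_iff]
    intro y _
    obtain ⟨x, hx, z, hz, hyxz⟩ := hdiv y y.2 H'.index (Nat.one_le_iff_ne_zero.mpr (hn ▸ hfin))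
    have hxY : (⟨x, hx⟩ : Y) ^ H'.index ∈ H' := H'.pow_index_mem _
    have hzZ : (⟨z, hZY hz⟩ : Y) ∈ Z' := hz
    have hy : y = (⟨x, hx⟩ : Y) ^ H'.index * ⟨z, hZY hz⟩ := by
      apply Subtype.ext
      simpa using hyxz
    rw [hy]
    exact Subgroup.mul_mem _ (Subgroup.mem_sup_left hxY) (Subgroup.mem_sup_right hzZ)
  constructor
  · have := congrArg (Subgroup.map Y.subtype) hsup
    rw [Subgroup.map_sup, Subgroup.subgroupOf_map_subtype, Subgroup.subgroupOf_map_subtype] at this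
    rw [inf_of_le_left hZY] at this
    rw [inf_comm] at this
    rw [this, ← MonoidHom.range_eq_map, Subgroup.range_subtype]
  · calc H.relIndex Y = H'.index := rfl
      _ = H'.relIndex ⊤ := (Subgroup.relIndex_top_right H').symm
      _ = H'.relIndex (H' ⊔ Z') := by rw [hsup]
      _ = H'.relIndex Z' := Subgroup.relIndex_sup_left Z' H'
      _ = H.relIndex Z := Subgroup.relIndex_subgroupOf hZY
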